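/- arXiv:1704.03062 — 5 statements merged into one kernel-verified Lean document; each statement's English description precedes it below -/
import Mathlib

section
/- Let $d \ge 1$, $\alpha > 0$, $\beta = 2\alpha^{1/d}$, and let $0 \le a \le b$ be reals with $\alpha a^d \ge i$ for a real $i \ge 0$. Then $\beta(b - a) \ge (2\alpha b^d - i)^{1/d} - (2\alpha a^d - i)^{1/d}$. -/
/-- If `0 ≤ v ≤ u` and `0 ≤ s`, then `(v+s)^d - v^d ≤ (u+s)^d - u^d`. -/
lemma pow_shift_mono (d : ℕ) {v u s : ℝ} (hv : 0 ≤ v) (hvu : v ≤ u) (hs : 0 ≤ s) :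
    (v + s) ^ d - v ^ d ≤ (u + s) ^ d - u ^ d := by
  have h : ∀ x : ℝ, (x + s) ^ d
      = ∑ k ∈ Finset.range d, x ^ k * s ^ (d - k) * d.choose k + x ^ d := by
    intro x
    rw [add_pow, Finset.sum_range_succ]
    simp
  rw [h u, h v, add_sub_cancel_right, add_sub_cancel_right]
  apply Finset.sum_le_sum
  intro k _
  have hp : v ^ k ≤ u ^ k := pow_le_pow_left₀ hv hvu k
  have hsp : (0:ℝ) ≤ s ^ (d - k) := pow_nonneg hs _
  have hc : (0:ℝ) ≤ (d.choose k : ℝ) := Nat.cast_nonneg _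
  exact mul_le_mul_of_nonneg_right (mul_le_mul_of_nonneg_right hp hsp) hc

/-- the key analytic inequality of Claim 2.1. -/
theorem stmt_1 (d : ℕ) (hd : 1 ≤ d) (α i : ℝ) (hα : 0 < α) (hi : 0 ≤ i)
    (a b : ℝ) (ha : 0 ≤ a) (hab : a ≤ b) (hia : i ≤ α * a ^ d) :
    (2 * α * b ^ d - i) ^ ((1 : ℝ) / d) - (2 * α * a ^ d - i) ^ ((1 : ℝ) / d)
      ≤ 2 * α ^ ((1 : ℝ) / d) * (b - a) := by
  have hdne : d ≠ 0 := by omega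
  set t : ℝ := α ^ ((1:ℝ)/d) with ht
  have htpos : 0 < t := Real.rpow_pos_of_pos hα _
  have htd : t ^ d = α := by
    rw [ht, one_div, Real.rpow_inv_natCast_pow hα.le hdne]
  have hadbd : a ^ d ≤ b ^ d := pow_le_pow_left₀ ha hab d
  have hx0 : 0 ≤ 2 * α * a ^ d - i := by nlinarith
  have hX0 : 0 ≤ 2 * α * b ^ d - i := by nlinarith
  set x := 2 * α * a ^ d - i with hxdef
  set X := 2 * α * b ^ d - i with hXdef
  set A := x ^ ((1:ℝ)/d) with hA
  set B := X ^ ((1:ℝ)/d) with hB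
  have hA0 : 0 ≤ A := Real.rpow_nonneg hx0 _
  have hB0 : 0 ≤ B := Real.rpow_nonneg hX0 _
  have hAd : A ^ d = x := by
    rw [hA, one_div, Real.rpow_inv_natCast_pow hx0 hdne]
  have hBd : B ^ d = X := by
    rw [hB, one_div, Real.rpow_inv_natCast_pow hX0 hdne]
  set s : ℝ := 2 * t * (b - a) with hs
  have hba : 0 ≤ b - a := sub_nonneg.2 hab
  have hs0 : 0 ≤ s := by positivity
  have hta : t * a ≤ A := by
    have hpow : (t * a) ^ d ≤ A ^ d := by
      rw [mul_pow, htd, hAd]; nlinarith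
    exact le_of_pow_le_pow_left₀ hdne hA0 hpow
  -- convexity step: (t*a + s)^d ≥ 2*(t*b)^d - (t*a)^d
  have h2 := pow_shift_mono d (mul_nonneg htpos.le ha)
      (by nlinarith : t * a ≤ t * b) (mul_nonneg htpos.le hba)
  have e1 : t * a + t * (b - a) = t * b := by ring
  have e2 : t * b + t * (b - a) = t * a + s := by rw [hs]; ring
  rw [e1, e2] at h2
  -- shift step
  have h1 := pow_shift_mono d (mul_nonneg htpos.le ha) hta hs0
  have key : X ≤ (A + s) ^ d := by
    have hta' : (t * a) ^ d = α * a ^ d := by rw [mul_pow, htd]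
    have htb' : (t * b) ^ d = α * b ^ d := by rw [mul_pow, htd]
    rw [hta'] at h1 h2
    rw [htb'] at h2
    rw [hAd] at h1
    rw [hXdef, hxdef] at *
    nlinarith
  have hBAs : B ≤ A + s := by
    refine le_of_pow_le_pow_left₀ hdne (by positivity) ?_
    rw [hBd]; exact key
  have : 2 * t * (b - a) = s := rfl
  linarith
end

section
/- The sequence consisting of all points of $\mathbb{Z}^m \subset \mathbb{R}^m$ (for $m \ge 2$) is not $1$-controlling: for every assignment of reals $(y_x)_{x \in \mathbb{Z}^m}$ there exists a $2$-Lipschitz function $f : \mathbb{R}^m \to \mathbb{R}$ such that $|f(x) - y_x| \ge 1$ for every $x \in \mathbb{Z}^m$. -/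
/-- the integer lattice `ℤ^m ⊆ ℝ^m` (`m ≥ 2`) is not `1`-controlling:
for any assignment of reals to the lattice points there is a `2`-Lipschitz function
`ℝ^m → ℝ` staying at distance `≥ 1` from all the assigned values. -/
theorem stmt_4 (m : ℕ) (hm : 2 ≤ m) (y : (Fin m → ℤ) → ℝ) :
    ∃ f : (Fin m → ℝ) → ℝ, LipschitzWith 2 f ∧
      ∀ z : Fin m → ℤ, 1 ≤ |f (fun j => (z j : ℝ)) - y z| := by
  classical
  set val : (Fin m → ℤ) → ℝ := fun z => if y z ≤ 0 then 1 else -1 with hval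
  set s : Set (Fin m → ℝ) := Set.range (fun z : Fin m → ℤ => fun j => (z j : ℝ)) with hs
  set f0 : (Fin m → ℝ) → ℝ := fun x => val (fun j => ⌊x j⌋) with hf0
  have hf0z : ∀ z : Fin m → ℤ, f0 (fun j => (z j : ℝ)) = val z := by
    intro z
    simp [hf0]
  have hlip : LipschitzOnWith 2 f0 s := by
    apply LipschitzOnWith.of_dist_le_mul
    rintro x ⟨z, rfl⟩ x' ⟨z', rfl⟩
    rcases eq_or_ne z z' with rfl | hne
    · simp
    · have h1 : dist (f0 fun j => (z j : ℝ)) (f0 fun j => (z' j : ℝ)) ≤ 2 := by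
        rw [hf0z, hf0z, Real.dist_eq]
        dsimp [val]
        split_ifs <;> norm_num
      have h2 : (1 : ℝ) ≤ dist (fun j => (z j : ℝ)) (fun j => (z' j : ℝ)) := by
        obtain ⟨j, hj⟩ := Function.ne_iff.mp hne
        calc (1 : ℝ) ≤ dist ((z j : ℝ)) ((z' j : ℝ)) := by
              rw [Real.dist_eq]
              have : z j - z' j ≠ 0 := sub_ne_zero.mpr hj
              have : (1 : ℤ) ≤ |z j - z' j| := Int.one_le_abs this
              push_cast [← Int.cast_sub]
              exact_mod_cast this
          _ ≤ dist (fun j => (z j : ℝ)) (fun j => (z' j : ℝ)) :=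
              dist_le_pi_dist (fun j => (z j : ℝ)) (fun j => (z' j : ℝ)) j
      calc dist (f0 fun j => (z j : ℝ)) (f0 fun j => (z' j : ℝ)) ≤ 2 := h1
        _ = 2 * 1 := by ring
        _ ≤ 2 * dist (fun j => (z j : ℝ)) (fun j => (z' j : ℝ)) := by
            exact mul_le_mul_of_nonneg_left h2 (by norm_num)
  obtain ⟨f, hf, heq⟩ := hlip.extend_real
  refine ⟨f, hf, fun z => ?_⟩
  have : f (fun j => (z j : ℝ)) = val z := by
    rw [← heq ⟨z, rfl⟩, hf0z]
  rw [this]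
  dsimp [val]
  split_ifs with h
  · rw [abs_of_nonneg (by linarith)]; linarith
  · rw [abs_of_nonpos (by linarith)]; linarith
end

section
/- Let $j, n, d$ be positive integers, $k = (j(n+1)+1)^d$, and let $0 \le x_1 \le x_2 \le \cdots \le x_k \le n$ be reals. Set $r = j(n+1)$, $r' = r/(r+1)$, and let $z_1 > z_2 > \cdots > z_k$ (in lexicographic order) be the centers of the unique partition of the $\ell_\infty$-ball of radius $r$ in $\mathbb{R}^d$ around the origin into $k$ subballs of radius $r'$. Define $y_i = z_i - j(n - x_i)v$ where $v = (1,\ldots,1) \in \mathbb{R}^d$. Then every $j$-Lipschitz function $f : \mathbb{R} \to \mathbb{R}^d$ (maximum norm) with $|f(0)| \le j$ satisfies $|f(x_i) - y_i| < 1$ for some $1 \le i \le k$. -/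
lemma aux_sum_lt (b : ℕ) (hb : 1 ≤ b) (d : ℕ) (e : ℕ → ℕ) (he : ∀ s, s < d → e s < b) :
    (∑ s ∈ Finset.range d, e s * b ^ s) + 1 ≤ b ^ d := by
  obtain ⟨c, rfl⟩ : ∃ c, b = c + 1 := ⟨b - 1, by omega⟩
  induction d with
  | zero => simp
  | succ d ih =>
    have h1 := ih (fun s hs => he s (hs.trans (Nat.lt_succ_self d)))
    have h2 : e d ≤ c := by have := he d (Nat.lt_succ_self d); omega
    rw [Finset.sum_range_succ, pow_succ]
    nlinarith [pow_pos (show 0 < c + 1 by omega) d]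

lemma aux_digit (b : ℕ) (hb : 1 ≤ b) (d u : ℕ) (hu : u < d) (e : ℕ → ℕ)
    (he : ∀ s, s < d → e s < b) :
    (∑ s ∈ Finset.range d, e s * b ^ s) / b ^ u % b = e u := by
  obtain ⟨v, rfl⟩ : ∃ v, d = u + (v + 1) := ⟨d - u - 1, by omega⟩
  have hbu : 0 < b ^ u := pow_pos (by omega) u
  rw [Finset.sum_range_add]
  have hM : ∑ s ∈ Finset.range (v + 1), e (u + s) * b ^ (u + s)
      = b ^ u * ∑ s ∈ Finset.range (v + 1), e (u + s) * b ^ s := by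
    rw [Finset.mul_sum]
    exact Finset.sum_congr rfl (fun s _ => by rw [pow_add]; ring)
  rw [hM]
  have hL : (∑ s ∈ Finset.range u, e s * b ^ s) < b ^ u := by
    have := aux_sum_lt b hb u e (fun s hs => he s (by omega))
    omega
  rw [Nat.add_mul_div_left _ _ hbu, Nat.div_eq_of_lt hL, Nat.zero_add]
  rw [Finset.sum_range_succ']
  simp only [pow_zero, mul_one, Nat.add_zero]
  have : ∑ s ∈ Finset.range v, e (u + (s + 1)) * b ^ (s + 1)
      = b * ∑ s ∈ Finset.range v, e (u + (s + 1)) * b ^ s := by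
    rw [Finset.mul_sum]
    exact Finset.sum_congr rfl (fun s _ => by rw [pow_succ]; ring)
  rw [this, Nat.add_comm, Nat.add_mul_mod_self_left, Nat.mod_eq_of_lt (he u hu)]

lemma aux_fix (k : ℕ) (hk : 0 < k) (F : ℕ → ℕ) (hFlt : ∀ m, m < k → F m < k)
    (hmono : ∀ a b, a ≤ b → b < k → F a ≤ F b) : ∃ m, m < k ∧ F m = m := by
  classical
  have hP : ∃ m, m < k ∧ F m ≤ m := ⟨k - 1, by omega, by have := hFlt (k - 1) (by omega); omega⟩
  obtain ⟨h1, h2⟩ := Nat.find_spec hP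
  refine ⟨Nat.find hP, h1, ?_⟩
  rcases eq_or_lt_of_le h2 with heq | hlt
  · exact heq
  · exfalso
    have h3 : F (F (Nat.find hP)) ≤ F (Nat.find hP) := hmono _ _ h2 h1
    exact Nat.find_min hP hlt ⟨lt_trans hlt h1, h3⟩

set_option maxHeartbeats 1000000 in
/-- Claim 3.1: with `k = (j(n+1)+1)^d`, `0 ≤ x₁ ≤ … ≤ x_k ≤ n`,
`r = j(n+1)`, `r' = r/(r+1)`, centers `z i` of the canonical partition of the `ℓ∞`-ball
of radius `r` in `ℝ^d` into `k` subballs of radius `r'`, indexed decreasingly in the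
lexicographic order (the `t`-th coordinate of `z i` is `r - r'(2 aₜ(i) + 1)` where
`aₜ(i) = (i / (r+1)^(d-1-t)) % (r+1)` is the `t`-th most significant base-`(r+1)` digit
of `i`), and `y i = z i - j(n - x i)·(1,…,1)`, every `j`-Lipschitz `f : ℝ → ℝ^d` (sup
norm) with `‖f 0‖ ≤ j` satisfies `‖f (x i) - y i‖ < 1` for some `i`. -/
theorem stmt_10 (j n d : ℕ) (hj : 1 ≤ j) (hn : 1 ≤ n) (hd : 1 ≤ d)
    (x : Fin ((j * (n + 1) + 1) ^ d) → ℝ)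
    (hx0 : ∀ i, 0 ≤ x i) (hxn : ∀ i, x i ≤ (n : ℝ)) (hmono : Monotone x)
    (f : ℝ → (Fin d → ℝ)) (hf : LipschitzWith (j : NNReal) f) (hf0 : ‖f 0‖ ≤ (j : ℝ)) :
    ∃ i, ‖f (x i) - (fun t : Fin d =>
        ((j * (n + 1) : ℝ)
          - ((j * (n + 1) : ℝ) / ((j * (n + 1) : ℝ) + 1)) *
            (2 * (((i : ℕ) / (j * (n + 1) + 1) ^ (d - 1 - (t : ℕ))) % (j * (n + 1) + 1) : ℕ) + 1)
          - (j : ℝ) * ((n : ℝ) - x i)))‖ < 1 := by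
  classical
  have hr1 : 1 ≤ j * (n + 1) := by
    have : 1 * 1 ≤ j * (n + 1) := Nat.mul_le_mul hj (by omega); omega
  have hk1 : 0 < (j * (n + 1) + 1) ^ d := pow_pos (by omega) d
  have hR : (((j * (n + 1) : ℕ)) : ℝ) = (j : ℝ) * ((n : ℝ) + 1) := by push_cast; ring
  have hRpos : (0 : ℝ) < ((j * (n + 1) : ℕ) : ℝ) := by exact_mod_cast hr1
  set ρ : ℝ := ((j * (n + 1) : ℕ) : ℝ) / (((j * (n + 1) : ℕ) : ℝ) + 1) with hρ
  have hρpos : 0 < ρ := by positivity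
  have hρlt : ρ < 1 := by rw [hρ, div_lt_one (by linarith)]; linarith
  -- coordinatewise Lipschitz
  have hlip : ∀ (t : Fin d) (p q : ℝ), |f p t - f q t| ≤ (j : ℝ) * |p - q| := by
    intro t p q
    have h1 : dist (f p t) (f q t) ≤ dist (f p) (f q) := dist_le_pi_dist (f p) (f q) t
    have h2 : dist (f p) (f q) ≤ (j : ℝ) * dist p q := by
      have := hf.dist_le_mul p q
      simpa using this
    rw [Real.dist_eq] at h1 h2
    linarith
  -- the shifted function
  set G : Fin d → ℝ → ℝ := fun t y => f y t + (j : ℝ) * ((n : ℝ) - y) with hG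
  have hGanti : ∀ (t : Fin d) (p q : ℝ), p ≤ q → G t q ≤ G t p := by
    intro t p q hpq
    have h := hlip t q p
    rw [abs_of_nonneg (by linarith : (0:ℝ) ≤ q - p)] at h
    have h2 := abs_le.mp h
    simp only [hG]
    nlinarith [h2.1, h2.2]
  have hGbound : ∀ (t : Fin d) (y : ℝ), 0 ≤ y → y ≤ (n : ℝ) →
      -((j * (n + 1) : ℕ) : ℝ) ≤ G t y ∧ G t y ≤ ((j * (n + 1) : ℕ) : ℝ) := by
    intro t y hy0 hyn
    have h1 := hlip t y 0
    rw [sub_zero, abs_of_nonneg hy0] at h1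
    have h2 := abs_le.mp h1
    have h3 : |f 0 t| ≤ (j : ℝ) := le_trans (norm_le_pi_norm (f 0) t) hf0
    have h4 := abs_le.mp h3
    have hjpos : (0:ℝ) ≤ (j : ℝ) := by positivity
    constructor
    · simp only [hG]; rw [hR]; nlinarith [h2.1, h4.1]
    · simp only [hG]; rw [hR]; nlinarith [h2.2, h4.2]
  -- cell index
  set c : Fin ((j * (n + 1) + 1) ^ d) → Fin d → ℕ :=
    fun i t => min (j * (n + 1)) ⌊(((j * (n + 1) : ℕ) : ℝ) - G t (x i)) / (2 * ρ)⌋₊ with hc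
  have hcbound : ∀ (i : Fin ((j * (n + 1) + 1) ^ d)) (t : Fin d),
      2 * ρ * (c i t : ℝ) ≤ ((j * (n + 1) : ℕ) : ℝ) - G t (x i) ∧
      ((j * (n + 1) : ℕ) : ℝ) - G t (x i) ≤ 2 * ρ * ((c i t : ℝ) + 1) := by
    intro i t
    obtain ⟨hlo, hhi⟩ := hGbound t (x i) (hx0 i) (hxn i)
    set U : ℝ := (((j * (n + 1) : ℕ) : ℝ) - G t (x i)) / (2 * ρ) with hU
    have h2ρ : (0 : ℝ) < 2 * ρ := by linarith
    have hU0 : 0 ≤ U := div_nonneg (by linarith) (by linarith)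
    have h2ρr : 2 * ρ * (((j * (n + 1) : ℕ) : ℝ) + 1) = 2 * ((j * (n + 1) : ℕ) : ℝ) := by
      rw [hρ]; field_simp
    have hUle : U ≤ ((j * (n + 1) : ℕ) : ℝ) + 1 := by
      rw [hU, div_le_iff₀ h2ρ]
      nlinarith
    have hcleU : ((c i t : ℕ) : ℝ) ≤ U := by
      calc ((c i t : ℕ) : ℝ) ≤ (⌊U⌋₊ : ℝ) := by
            exact_mod_cast Nat.min_le_right (j * (n + 1)) ⌊U⌋₊
        _ ≤ U := Nat.floor_le hU0
    have hUlec : U ≤ ((c i t : ℕ) : ℝ) + 1 := by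
      rcases le_or_gt ⌊U⌋₊ (j * (n + 1)) with h | h
      · have hcv : c i t = ⌊U⌋₊ := min_eq_right h
        rw [hcv]
        exact le_of_lt (Nat.lt_floor_add_one U)
      · have hcv : c i t = j * (n + 1) := min_eq_left (le_of_lt h)
        rw [hcv]
        exact_mod_cast hUle
    have hUeq : U * (2 * ρ) = ((j * (n + 1) : ℕ) : ℝ) - G t (x i) := by
      rw [hU]; field_simp
    constructor
    · have h5 := (le_div_iff₀ h2ρ).mp hcleU
      nlinarith [h5]
    · have h5 := (div_le_iff₀ h2ρ).mp hUlec
      nlinarith [h5]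
  have hclt : ∀ (i : Fin ((j * (n + 1) + 1) ^ d)) (t : Fin d), c i t < j * (n + 1) + 1 := by
    intro i t; have : c i t ≤ j * (n + 1) := min_le_left _ _; omega
  have hcmono : ∀ (i i' : Fin ((j * (n + 1) + 1) ^ d)) (t : Fin d), i ≤ i' → c i t ≤ c i' t := by
    intro i i' t hii
    have hx : x i ≤ x i' := hmono hii
    have hg : G t (x i') ≤ G t (x i) := hGanti t _ _ hx
    apply min_le_min le_rfl
    apply Nat.floor_le_floor
    have h2ρ : (0 : ℝ) < 2 * ρ := by linarith
    exact (div_le_div_iff_of_pos_right h2ρ).mpr (by linarith)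
  -- the digit-sum map
  set F : ℕ → ℕ := fun m =>
    if h : m < (j * (n + 1) + 1) ^ d then
      ∑ s ∈ Finset.range d, c ⟨m, h⟩ ⟨d - 1 - s, by omega⟩ * (j * (n + 1) + 1) ^ s
    else 0 with hF
  have hFlt : ∀ m, m < (j * (n + 1) + 1) ^ d → F m < (j * (n + 1) + 1) ^ d := by
    intro m hm
    rw [hF]; simp only [dif_pos hm]
    have h5 : (∑ s ∈ Finset.range d, c ⟨m, hm⟩ ⟨d - 1 - s, by omega⟩ * (j * (n + 1) + 1) ^ s)
        + 1 ≤ (j * (n + 1) + 1) ^ d :=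
      aux_sum_lt (j * (n + 1) + 1) (by omega) d
        (fun s => c ⟨m, hm⟩ ⟨d - 1 - s, by omega⟩) (fun s _ => hclt _ _)
    omega
  have hFmono : ∀ a b, a ≤ b → b < (j * (n + 1) + 1) ^ d → F a ≤ F b := by
    intro a b hab hb
    have ha : a < (j * (n + 1) + 1) ^ d := lt_of_le_of_lt hab hb
    rw [hF]; simp only [dif_pos ha, dif_pos hb]
    apply Finset.sum_le_sum
    intro s _
    exact Nat.mul_le_mul_right _ (hcmono ⟨a, ha⟩ ⟨b, hb⟩ _ hab)
  obtain ⟨m, hm, hfix⟩ := aux_fix _ hk1 F hFlt hFmono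
  refine ⟨⟨m, hm⟩, ?_⟩
  rw [pi_norm_lt_iff one_pos]
  intro t
  -- identify the digits
  have hdig : (m / (j * (n + 1) + 1) ^ (d - 1 - (t : ℕ))) % (j * (n + 1) + 1)
      = c ⟨m, hm⟩ t := by
    have htd := t.isLt
    have hsum : (∑ s ∈ Finset.range d,
        c ⟨m, hm⟩ ⟨d - 1 - s, by omega⟩ * (j * (n + 1) + 1) ^ s) = m := by
      conv_rhs => rw [← hfix]
      rw [hF]; simp only [dif_pos hm]
    have hu : d - 1 - (t : ℕ) < d := by omega
    have hext : (∑ s ∈ Finset.range d,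
        c ⟨m, hm⟩ ⟨d - 1 - s, by omega⟩ * (j * (n + 1) + 1) ^ s)
          / (j * (n + 1) + 1) ^ (d - 1 - (t : ℕ)) % (j * (n + 1) + 1)
        = c ⟨m, hm⟩ ⟨d - 1 - (d - 1 - (t : ℕ)), by omega⟩ :=
      aux_digit (j * (n + 1) + 1) (by omega) d (d - 1 - (t : ℕ)) hu
        (fun s => c ⟨m, hm⟩ ⟨d - 1 - s, by omega⟩) (fun s _ => hclt _ _)
    have hfin : (⟨d - 1 - (d - 1 - (t : ℕ)), by omega⟩ : Fin d) = t := by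
      apply Fin.ext
      show d - 1 - (d - 1 - (t : ℕ)) = (t : ℕ)
      omega
    rw [hfin] at hext
    rw [hsum] at hext
    exact hext
  have hcell := hcbound ⟨m, hm⟩ t
  have heq : f (x ⟨m, hm⟩) t -
      (((j : ℝ) * ((n : ℝ) + 1))
        - (((j : ℝ) * ((n : ℝ) + 1)) / (((j : ℝ) * ((n : ℝ) + 1)) + 1)) *
          (2 * ((c ⟨m, hm⟩ t : ℕ) : ℝ) + 1)
        - (j : ℝ) * ((n : ℝ) - x ⟨m, hm⟩))
      = G t (x ⟨m, hm⟩)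
        - (((j * (n + 1) : ℕ) : ℝ) - ρ * (2 * ((c ⟨m, hm⟩ t : ℕ) : ℝ) + 1)) := by
    simp only [hG]
    rw [hρ, hR]
    ring
  simp only [Pi.sub_apply, Real.norm_eq_abs]
  rw [hdig, heq]
  rw [abs_sub_lt_iff]
  constructor <;> nlinarith [hcell.1, hcell.2, hρpos, hρlt]
end

section
/- Let $m, d \ge 1$ and let $(x_i)_{i \in I}$ be a sequence in $\mathbb{R}^m$ that has a subsequence converging to some point $x \in \mathbb{R}^m$. Then $(x_i)_{i \in I}$ is $d$-controlling. -/
open Filter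

/-- A sequence `(x i)` in `ℝ^m` (sup norm) is `d`-controlling if one can choose points
`(y i)` in `ℝ^d` so that every Lipschitz function `f : ℝ^m → ℝ^d` satisfies
`‖f (x i) - y i‖ < 1` for some `i`. -/
def Controlling (m d : ℕ) {I : Type*} (x : I → (Fin m → ℝ)) : Prop :=
  ∃ y : I → (Fin d → ℝ), ∀ f : (Fin m → ℝ) → (Fin d → ℝ),
    (∃ C : NNReal, LipschitzWith C f) → ∃ i, ‖f (x i) - y i‖ < 1

/-- a sequence in `ℝ^m` having a convergent subsequence is `d`-controlling. -/
theorem stmt_13 (m d : ℕ) (hm : 1 ≤ m) (hd : 1 ≤ d)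
    {I : Type*} (x : I → (Fin m → ℝ))
    (h : ∃ (φ : ℕ → I) (p : Fin m → ℝ), Function.Injective φ ∧
      Tendsto (fun k => x (φ k)) atTop (nhds p)) :
    Controlling m d x := by
  classical
  obtain ⟨φ, p, hφ, hconv⟩ := h
  obtain ⟨u, hu⟩ := TopologicalSpace.exists_dense_seq (Fin d → ℝ)
  set q : ℕ → (Fin d → ℝ) := fun k => u (Nat.unpair k).1 with hq
  refine ⟨fun i => if hi : ∃ k, φ k = i then q hi.choose else 0, ?_⟩
  rintro f ⟨C, hf⟩
  have hcont : Tendsto (fun k => f (x (φ k))) atTop (nhds (f p)) :=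
    (hf.continuous.tendsto p).comp hconv
  obtain ⟨n, hn⟩ : ∃ n, dist (f p) (u n) < 1/2 :=
    hu.exists_dist_lt (f p) (by norm_num : (0:ℝ) < 1/2)
  obtain ⟨N, hN⟩ := Metric.tendsto_atTop.1 hcont (1/2) (by norm_num)
  set k := Nat.pair n N with hk
  have hkN : N ≤ k := Nat.right_le_pair n N
  have hi : ∃ k', φ k' = φ k := ⟨k, rfl⟩
  refine ⟨φ k, ?_⟩
  have hy : (if hi : ∃ k', φ k' = φ k then q hi.choose else 0) = u n := by
    rw [dif_pos hi]
    have : hi.choose = k := hφ hi.choose_spec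
    rw [this, hq]
    simp [hk]
  rw [← dist_eq_norm]
  show dist (f (x (φ k))) (if hi : ∃ k', φ k' = φ k then q hi.choose else 0) < 1
  rw [hy]
  calc dist (f (x (φ k))) (u n)
      ≤ dist (f (x (φ k))) (f p) + dist (f p) (u n) := dist_triangle _ _ _
    _ < 1/2 + 1/2 := add_lt_add (hN k hkN) hn
    _ = 1 := by norm_num
end

section
/- Let $m \le d$ be positive integers and suppose a sequence $(x_i)_{i \in I}$ in $\mathbb{R}^m$ satisfies: for every $\alpha > 0$, the set of points $x \in \mathbb{R}^m$ with $|\{i \in I : \|x_i - x\|_\infty < \alpha\}| < \|x\|_\infty^{d-m}$ is bounded. Then $\sup_{n \in \mathbb{N}} |\{i \in I : \|x_i\|_\infty \le n\}| / n^d = \infty$. -/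
open ENNReal

lemma aux_sum_encard_le {ι I : Type*} [Fintype ι] (f : ι → Set I)
    (hd : Pairwise (Function.onFun Disjoint f)) :
    ∑ j, (f j).encard ≤ (⋃ j, f j).encard := by
  classical
  have key : ∀ s : Finset ι, ∑ j ∈ s, (f j).encard = (⋃ j ∈ s, f j).encard := by
    intro s
    induction s using Finset.induction_on with
    | empty => simp
    | @insert a s ha ih =>
      rw [Finset.sum_insert ha, ih, Finset.set_biUnion_insert,
        Set.encard_union_eq]
      exact Set.disjoint_iUnion₂_right.mpr fun j hj => hd (fun hh => ha (hh ▸ hj))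
  calc ∑ j, (f j).encard = (⋃ j ∈ Finset.univ, f j).encard := key Finset.univ
    _ ≤ (⋃ j, f j).encard := le_of_eq (by congr 1; simp)

/-- if for every `α > 0` the set of points `x ∈ ℝ^m` whose `α`-neighborhood
(sup norm) contains fewer than `‖x‖^(d-m)` terms of the sequence is bounded, then the
sequence satisfies `sup_n |{i : ‖x_i‖ ≤ n}| / n^d = ∞`. -/
theorem stmt_14 (m d : ℕ) (hm : 1 ≤ m) (hmd : m ≤ d)
    {I : Type*} (x : I → (Fin m → ℝ))
    (h : ∀ α : ℝ, 0 < α → Bornology.IsBounded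
      {p : Fin m → ℝ |
        (({i | ‖x i - p‖ < α}.encard : ℝ≥0∞) < ENNReal.ofReal (‖p‖ ^ (d - m)))}) :
    ∀ M : ℕ, ∃ n : ℕ, 0 < n ∧
      ((M * n ^ d : ℕ) : ℕ∞) ≤ {i | ‖x i‖ ≤ (n : ℝ)}.encard := by
  intro M
  set T : ℕ := M * 3 ^ d + 1 with hT
  have hT0 : 0 < T := Nat.succ_pos _
  have hTR : (0:ℝ) < T := by exact_mod_cast hT0
  set α : ℝ := 1 / (2 * T) with hαdef
  have hα : 0 < α := by positivity
  obtain ⟨r, hr⟩ := (h α hα).subset_closedBall 0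
  set n : ℕ := ⌈r⌉₊ + 1 with hn
  have hn0 : 0 < n := Nat.succ_pos _
  have hnR : (0:ℝ) < n := by exact_mod_cast hn0
  have hn1 : (1:ℝ) ≤ n := by exact_mod_cast hn0
  have hrn : r < (n:ℝ) := by
    calc r ≤ ⌈r⌉₊ := Nat.le_ceil r
    _ < n := by exact_mod_cast Nat.lt_succ_self _
  -- grid of centers
  set p : (Fin m → Fin (n * T)) → (Fin m → ℝ) :=
    fun j k => (n : ℝ) + (j k : ℝ) / T with hp
  have hcoord_lb : ∀ j k, (n : ℝ) ≤ p j k := by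
    intro j k
    have : (0:ℝ) ≤ (j k : ℝ) / T := by positivity
    simp only [hp]; linarith
  have hcoord_ub : ∀ j k, p j k ≤ 2 * n := by
    intro j k
    have h1 : ((j k : ℕ) : ℝ) ≤ (n * T : ℕ) := by
      exact_mod_cast (j k).2.le
    have h2 : (j k : ℝ) / T ≤ n := by
      rw [div_le_iff₀ hTR]
      calc ((j k : ℕ) : ℝ) ≤ ((n * T : ℕ) : ℝ) := h1
        _ = (n : ℝ) * T := by push_cast; ring
    simp only [hp]; linarith
  have hnorm_lb : ∀ j, (n : ℝ) ≤ ‖p j‖ := by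
    intro j
    have hk : ‖p j ⟨0, hm⟩‖ ≤ ‖p j‖ := norm_le_pi_norm (p j) ⟨0, hm⟩
    have := hcoord_lb j ⟨0, hm⟩
    have habs : p j ⟨0, hm⟩ ≤ |p j ⟨0, hm⟩| := le_abs_self _
    rw [Real.norm_eq_abs] at hk
    linarith
  have hnorm_ub : ∀ j, ‖p j‖ ≤ 2 * n := by
    intro j
    refine pi_norm_le_iff_of_nonneg (by positivity) |>.mpr fun k => ?_
    rw [Real.norm_eq_abs, abs_le]
    constructor
    · have := hcoord_lb j k; linarith
    · exact hcoord_ub j k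
  -- each center's ball contains many points
  set S : (Fin m → Fin (n * T)) → Set I := fun j => {i | ‖x i - p j‖ < α} with hS
  have hgood : ∀ j, ((n ^ (d - m) : ℕ) : ℕ∞) ≤ (S j).encard := by
    intro j
    have hout : p j ∉ Metric.closedBall (0 : Fin m → ℝ) r := by
      simp only [Metric.mem_closedBall, dist_zero_right, not_le]
      exact lt_of_lt_of_le hrn (hnorm_lb j)
    have : ¬ ((((S j).encard : ℝ≥0∞)) < ENNReal.ofReal (‖p j‖ ^ (d - m))) := by
      intro hc
      exact hout (hr hc)
    rw [not_lt] at this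
    have h1 : ENNReal.ofReal ((n : ℝ) ^ (d - m)) ≤ ENNReal.ofReal (‖p j‖ ^ (d - m)) :=
      ENNReal.ofReal_le_ofReal (pow_le_pow_left₀ (le_of_lt hnR) (hnorm_lb j) _)
    have h2 : ((n ^ (d - m) : ℕ) : ℝ≥0∞) ≤ ((S j).encard : ℝ≥0∞) := by
      calc ((n ^ (d - m) : ℕ) : ℝ≥0∞) = ENNReal.ofReal ((n : ℝ) ^ (d - m)) := by
            rw [← ENNReal.ofReal_natCast]
            congr 1
            push_cast
            ring
        _ ≤ _ := le_trans h1 this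
    exact_mod_cast ENat.toENNReal_le.mp (by exact_mod_cast h2)
  -- disjointness
  have hdisj : Pairwise (Function.onFun Disjoint S) := by
    intro j j' hjj'
    rw [Function.onFun]
    rw [Set.disjoint_left]
    intro i hi hi'
    obtain ⟨k, hk⟩ : ∃ k, j k ≠ j' k := by
      by_contra hc
      push_neg at hc
      exact hjj' (funext hc)
    have e1 : ‖(x i - p j) k‖ ≤ ‖x i - p j‖ := norm_le_pi_norm _ k
    have e2 : ‖(x i - p j') k‖ ≤ ‖x i - p j'‖ := norm_le_pi_norm _ k
    simp only [Pi.sub_apply, Real.norm_eq_abs] at e1 e2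
    have hi1 : ‖x i - p j‖ < α := hi
    have hi2 : ‖x i - p j'‖ < α := hi'
    have hdistc : |p j k - p j' k| < 2 * α := by
      have := abs_sub (x i k - p j k) (x i k - p j' k)
      calc |p j k - p j' k| = |(x i k - p j' k) - (x i k - p j k)| := by ring_nf
        _ ≤ |x i k - p j' k| + |x i k - p j k| := abs_sub _ _
        _ < 2 * α := by linarith
    have hsep : (1:ℝ) / T ≤ |p j k - p j' k| := by
      have hne : ((j k : ℕ) : ℤ) ≠ ((j' k : ℕ) : ℤ) := by
        intro hc
        exact hk (Fin.ext (by exact_mod_cast hc))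
      have : (1:ℤ) ≤ |((j k : ℕ) : ℤ) - ((j' k : ℕ) : ℤ)| :=
        Int.one_le_abs (sub_ne_zero.mpr hne)
      have h1R : (1:ℝ) ≤ |((j k : ℕ) : ℝ) - ((j' k : ℕ) : ℝ)| := by
        exact_mod_cast this
      have : p j k - p j' k = (((j k : ℕ) : ℝ) - ((j' k : ℕ) : ℝ)) / T := by
        simp only [hp]; ring
      rw [this, abs_div, abs_of_pos hTR]
      gcongr
    have : 2 * α = 1 / T := by rw [hαdef]; field_simp
    linarith
  -- the union is inside the big ball
  have hsub : ∀ j, S j ⊆ {i | ‖x i‖ ≤ ((3 * n : ℕ) : ℝ)} := by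
    intro j i hi
    have h1 : ‖x i‖ ≤ ‖x i - p j‖ + ‖p j‖ := by
      calc ‖x i‖ = ‖(x i - p j) + p j‖ := by ring_nf
        _ ≤ _ := norm_add_le _ _
    have h2 : ‖x i - p j‖ < α := hi
    have h3 : α ≤ 1 := by
      rw [hαdef, div_le_one (by positivity)]
      have : (1:ℝ) ≤ T := by exact_mod_cast hT0
      linarith
    have : ((3 * n : ℕ) : ℝ) = 3 * n := by push_cast; ring
    rw [Set.mem_setOf_eq, this]
    have := hnorm_ub j
    linarith
  -- assemble
  refine ⟨3 * n, by positivity, ?_⟩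
  have hUnion : (⋃ j, S j) ⊆ {i | ‖x i‖ ≤ ((3 * n : ℕ) : ℝ)} :=
    Set.iUnion_subset hsub
  have hcard : ((((n * T) ^ m * n ^ (d - m) : ℕ)) : ℕ∞) ≤ (⋃ j, S j).encard := by
    calc ((((n * T) ^ m * n ^ (d - m) : ℕ)) : ℕ∞)
        = ∑ _j : Fin m → Fin (n * T), ((n ^ (d - m) : ℕ) : ℕ∞) := by
          rw [Finset.sum_const, nsmul_eq_mul]
          simp only [Finset.card_univ, Fintype.card_fun, Fintype.card_fin]
          push_cast
          ring
      _ ≤ ∑ j, (S j).encard := Finset.sum_le_sum fun j _ => hgood j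
      _ ≤ (⋃ j, S j).encard := aux_sum_encard_le S hdisj
  have hnat : M * (3 * n) ^ d ≤ (n * T) ^ m * n ^ (d - m) := by
    have e1 : (n * T) ^ m * n ^ (d - m) = T ^ m * n ^ d := by
      rw [mul_pow, mul_right_comm, ← pow_add, Nat.add_sub_cancel' hmd]
      ring
    rw [e1, mul_pow, ← mul_assoc]
    refine Nat.mul_le_mul_right _ ?_
    calc M * 3 ^ d ≤ T := Nat.le_succ _
      _ ≤ T ^ m := Nat.le_self_pow (by omega) _
  calc ((M * (3 * n) ^ d : ℕ) : ℕ∞) ≤ (((n * T) ^ m * n ^ (d - m) : ℕ) : ℕ∞) := by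
        exact_mod_cast hnat
    _ ≤ (⋃ j, S j).encard := hcard
    _ ≤ _ := Set.encard_le_encard hUnion
end
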